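/- Let f : [a,b] → ℝ be continuous and positive with ∫_a^b f(x) dx ≥ (b-a)^(p-1), where p > 1. Then ∫_a^b f(x)^p dx ≥ (∫_a^b f(x) dx)^(p-1). -/

import Mathlib

open MeasureTheory Set

theorem qi_inequality (a b p : ℝ) (hab : a < b) (hp : 1 < p) (f : ℝ → ℝ)
    (hfc : ContinuousOn f (Set.Icc a b))
    (hfpos : ∀ x ∈ Set.Icc a b, 0 < f x)
    (hint : (∫ x in a..b, f x) ≥ (b - a) ^ (p - 1)) :
    (∫ x in a..b, f x ^ p) ≥ (∫ x in a..b, f x) ^ (p - 1) := by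
  set q : ℝ := p / (p - 1) with hq
  have hpq : p.HolderConjugate q := Real.HolderConjugate.conjExponent hp
  set μ : Measure ℝ := volume.restrict (Set.Ioc a b) with hμ
  have hL : (0:ℝ) < b - a := sub_pos.2 hab
  haveI : IsFiniteMeasure μ := by
    constructor
    rw [hμ, Measure.restrict_apply_univ, Real.volume_Ioc]
    exact ENNReal.ofReal_lt_top
  have hμuniv : (μ Set.univ).toReal = b - a := by
    rw [hμ, Measure.restrict_apply_univ, Real.volume_Ioc, ENNReal.toReal_ofReal hL.le]
  have hsub : Set.Ioc a b ⊆ Set.Icc a b := Set.Ioc_subset_Icc_self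
  have hmeas : AEStronglyMeasurable f μ :=
    (hfc.mono hsub).aestronglyMeasurable measurableSet_Ioc
  obtain ⟨C, hC⟩ := (isCompact_Icc (a := a) (b := b)).exists_bound_of_continuousOn hfc
  have hbound : ∀ᵐ x ∂μ, ‖f x‖ ≤ C := by
    rw [hμ, ae_restrict_iff' measurableSet_Ioc]
    exact Filter.Eventually.of_forall fun x hx => hC x (hsub hx)
  have hftop : MemLp f ⊤ μ := memLp_top_of_bound hmeas C hbound
  have hfp : MemLp f (ENNReal.ofReal p) μ := hftop.mono_exponent le_top
  have hgq : MemLp (fun _ : ℝ => (1:ℝ)) (ENNReal.ofReal q) μ := memLp_const 1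
  have hmem : ∀ᵐ x ∂μ, x ∈ Set.Ioc a b := ae_restrict_mem measurableSet_Ioc
  have hf_nonneg : 0 ≤ᵐ[μ] f := by
    filter_upwards [hmem] with x hx
    exact (hfpos x (hsub hx)).le
  have holder := MeasureTheory.integral_mul_le_Lp_mul_Lq_of_nonneg hpq hf_nonneg
    (Filter.Eventually.of_forall fun _ => zero_le_one) hfp hgq
  simp only [mul_one, Real.one_rpow, integral_const, smul_eq_mul] at holder
  -- rewrite interval integrals as integrals over μ
  have hI : (∫ x in a..b, f x) = ∫ x, f x ∂μ := intervalIntegral.integral_of_le hab.le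
  have hA : (∫ x in a..b, f x ^ p) = ∫ x, f x ^ p ∂μ := intervalIntegral.integral_of_le hab.le
  set I : ℝ := ∫ x, f x ∂μ with hIdef
  set A : ℝ := ∫ x, f x ^ p ∂μ with hAdef
  rw [hI] at hint ⊢
  rw [hA]
  rw [Measure.real, hμuniv] at holder
  -- holder : I ≤ A ^ (1/p) * (b - a) ^ (1/q)... check form
  have hIpos : 0 < I := lt_of_lt_of_le (Real.rpow_pos_of_pos hL _) hint
  have hA_nonneg : 0 ≤ A := by
    apply integral_nonneg_of_ae
    filter_upwards [hmem] with x hx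
    exact Real.rpow_nonneg (hfpos x (hsub hx)).le p
  have hp0 : (0:ℝ) < p := hpq.pos
  -- raise holder to power p
  have key : I ^ p ≤ A * (b - a) ^ (p - 1) := by
    have h1 : I ^ p ≤ (A ^ (1/p) * (b - a) ^ (1/q)) ^ p :=
      Real.rpow_le_rpow hIpos.le holder hp0.le
    calc I ^ p ≤ (A ^ (1/p) * (b - a) ^ (1/q)) ^ p := h1
      _ = A ^ (1/p * p) * (b - a) ^ (1/q * p) := by
          rw [Real.mul_rpow (Real.rpow_nonneg hA_nonneg _) (Real.rpow_nonneg hL.le _),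
            ← Real.rpow_mul hA_nonneg, ← Real.rpow_mul hL.le]
      _ = A * (b - a) ^ (p - 1) := by
          rw [one_div_mul_cancel hp0.ne', Real.rpow_one]
          congr 1
          rw [one_div, inv_mul_eq_div, hpq.div_conj_eq_sub_one]
  -- I^p = I^(p-1) * I
  have hIp : I ^ p = I ^ (p - 1) * I := by
    nth_rewrite 1 [show p = (p - 1) + 1 by ring]
    rw [Real.rpow_add hIpos, Real.rpow_one]
  have hLp : (b - a) ^ (p - 1) ≤ I := hint
  have hLp_pos : (0:ℝ) < (b - a) ^ (p - 1) := Real.rpow_pos_of_pos hL _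
  -- A ≥ I^p / (b-a)^(p-1) ≥ I^(p-1)
  have h2 : I ^ (p - 1) * (b - a) ^ (p - 1) ≤ A * (b - a) ^ (p - 1) := by
    calc I ^ (p - 1) * (b - a) ^ (p - 1) ≤ I ^ (p - 1) * I := by
          exact mul_le_mul_of_nonneg_left hLp (Real.rpow_nonneg hIpos.le _)
      _ = I ^ p := hIp.symm
      _ ≤ A * (b - a) ^ (p - 1) := key
  exact le_of_mul_le_mul_right h2 hLp_pos
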